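/- Uniqueness for the discrete MHD system under smallness: if two discrete solutions (u_h, b_h), (u_h', b_h') ∈ V_h × X_h both satisfy the discrete weak MHD system and the a priori bound ‖(u_h, b_h)‖, ‖(u_h', b_h')‖ ≤ η·m* with m* = min(R_e⁻¹, R_m⁻¹λ₀*), and the condition N̂₂ η < 1 holds where N̂₂ = √2 λ₁ max{λ₁*, λ₂*} bounds the combined trilinear forms, then (u_h, b_h) = (u_h', b_h'). -/
import Mathlib


private lemma stmt18_aux (m N p q T A η : ℝ) (hm : 0 < m) (hq : 0 ≤ q) (hp : 0 < p)
    (hco : m * p ^ 2 ≤ A) (hkey : A = -T) (hT : |T| ≤ N * p * q * p)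
    (hbound : q ≤ η * m) (hsmall : N * η < 1) : False := by
  have habs := neg_abs_le T
  have hle : m * p ^ 2 ≤ N * q * p ^ 2 := by nlinarith
  have hm2 : m ≤ N * q := le_of_mul_le_mul_right hle (pow_pos hp 2)
  rcases le_or_gt N 0 with hN | hN
  · nlinarith [mul_nonneg (neg_nonneg.mpr hN) hq]
  · nlinarith [mul_le_mul_of_nonneg_left hbound (le_of_lt hN),
      mul_lt_mul_of_pos_right hsmall hm]

/-- Uniqueness for the discrete MHD system under the smallness
condition: if `(u_h, b_h)` and `(u_h', b_h')` in `V_h × X_h` both solve the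
discrete weak MHD system (restricted to discretely divergence-free test
functions, so the pressure and multiplier terms drop out), both satisfy the
a priori bound `‖(·,·)‖ ≤ η·m*` with `m* = min(R_e⁻¹, R_m⁻¹λ₀*)`, the forms are
coercive with constant `m*` and the combined trilinear bound with
`N̂₂ = √2 λ₁ max{λ₁*, λ₂*}` holds on the discrete spaces, and `N̂₂ η < 1`,
then the two solutions coincide.  `PN v c` denotes `‖(v,c)‖`. -/
theorem stmt_18 {V C : Type*}
    [AddCommGroup V] [Module ℝ V] [AddCommGroup C] [Module ℝ C]
    (Vh : Submodule ℝ V) (Xh : Submodule ℝ C)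
    (a_s : V →ₗ[ℝ] V →ₗ[ℝ] ℝ) (a_m : C →ₗ[ℝ] C →ₗ[ℝ] ℝ)
    (c₀ : V →ₗ[ℝ] V →ₗ[ℝ] V →ₗ[ℝ] ℝ) (c₁ : C →ₗ[ℝ] V →ₗ[ℝ] C →ₗ[ℝ] ℝ)
    (f : V →ₗ[ℝ] ℝ) (g : C →ₗ[ℝ] ℝ)
    (PN : V → C → ℝ)
    (Re Rm lam0s lam1 lam1s lam2s η : ℝ)
    (hRe : 0 < Re) (hRm : 0 < Rm) (hlam0s : 0 < lam0s) (hη : 0 ≤ η)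
    (hPNnn : ∀ v c, 0 ≤ PN v c)
    (hPNzero : ∀ v c, PN v c = 0 → v = 0 ∧ c = 0)
    (hskew : ∀ w a v : V, c₀ w a v = - c₀ w v a)
    (hcoer : ∀ v ∈ Vh, ∀ c ∈ Xh,
      min Re⁻¹ (Rm⁻¹ * lam0s) * (PN v c) ^ 2 ≤ a_s v v + a_m c c)
    (hTri : ∀ w ∈ Vh, ∀ d ∈ Xh, ∀ vt ∈ Vh, ∀ ct ∈ Xh, ∀ v ∈ Vh, ∀ c ∈ Xh,
      |c₀ w vt v - c₁ d v ct + c₁ d vt c|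
        ≤ (Real.sqrt 2 * lam1 * max lam1s lam2s) * PN w d * PN vt ct * PN v c)
    (hsmall : (Real.sqrt 2 * lam1 * max lam1s lam2s) * η < 1)
    (u u' : V) (b b' : C)
    (hu : u ∈ Vh) (hu' : u' ∈ Vh) (hb : b ∈ Xh) (hb' : b' ∈ Xh)
    (hbound : PN u b ≤ η * min Re⁻¹ (Rm⁻¹ * lam0s))
    (hbound' : PN u' b' ≤ η * min Re⁻¹ (Rm⁻¹ * lam0s))
    (hsys1 : ∀ v ∈ Vh, a_s u v + c₀ u u v - c₁ b v b = f v)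
    (hsys1' : ∀ v ∈ Vh, a_s u' v + c₀ u' u' v - c₁ b' v b' = f v)
    (hsys2 : ∀ c ∈ Xh, a_m b c + c₁ b u c = g c)
    (hsys2' : ∀ c ∈ Xh, a_m b' c + c₁ b' u' c = g c) :
    u = u' ∧ b = b' := by
  have hwV : u - u' ∈ Vh := Vh.sub_mem hu hu'
  have hdX : b - b' ∈ Xh := Xh.sub_mem hb hb'
  have e1 := hsys1 (u - u') hwV
  have e1' := hsys1' (u - u') hwV
  have e2 := hsys2 (b - b') hdX
  have e2' := hsys2' (b - b') hdX
  have hsk := hskew u' (u - u') (u - u')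
  have key : a_s (u - u') (u - u') + a_m (b - b') (b - b')
      = -(c₀ (u - u') u (u - u') - c₁ (b - b') (u - u') b + c₁ (b - b') u (b - b')) := by
    simp only [map_sub, LinearMap.sub_apply] at e1 e1' e2 e2' hsk ⊢
    linarith
  have hT := hTri (u - u') hwV (b - b') hdX u hu b hb (u - u') hwV (b - b') hdX
  have hm : 0 < min Re⁻¹ (Rm⁻¹ * lam0s) := lt_min (by positivity) (by positivity)
  have hco := hcoer (u - u') hwV (b - b') hdX
  have hPN0 : PN (u - u') (b - b') = 0 := by
    by_contra h
    have hp : 0 < PN (u - u') (b - b') := lt_of_le_of_ne (hPNnn _ _) (Ne.symm h)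
    exact stmt18_aux _ _ _ _ _ _ _ hm (hPNnn u b) hp hco key hT hbound hsmall
  obtain ⟨h1, h2⟩ := hPNzero _ _ hPN0
  exact ⟨sub_eq_zero.mp h1, sub_eq_zero.mp h2⟩
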